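/- Let H be an n×n Hermitian complex matrix, let W be an n×n complex matrix, and let ε > 0 and T > 0. Then there exists a positive integer k such that ‖exp(-i·k·T·H)·W - W‖ < ε, where ‖·‖ is the Frobenius norm; moreover, the set of positive integers k with this property is infinite. (Strong Poincaré-type recurrence for the Hamiltonian flow φ_t(W) = exp(-itH)·W.) -/

import Mathlib

open Matrix NormedSpace

/-- The Frobenius norm `‖X‖ = (tr(Xᴴ·X))^{1/2}` of a complex matrix. -/
noncomputable def frobeniusNorm {n : ℕ} (X : Matrix (Fin n) (Fin n) ℂ) : ℝ :=
  Real.sqrt (Xᴴ * X).trace.re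

lemma frob_mul_left {n : ℕ} (U X : Matrix (Fin n) (Fin n) ℂ) (hU : Uᴴ * U = 1) :
    frobeniusNorm (U * X) = frobeniusNorm X := by
  unfold frobeniusNorm
  rw [conjTranspose_mul, mul_assoc, ← mul_assoc Uᴴ, hU, one_mul]

section FrobSection

attribute [local instance] Matrix.frobeniusNormedAddCommGroup Matrix.frobeniusNormedSpace
  Matrix.frobeniusNormedRing

lemma frobeniusNorm_eq_norm {n : ℕ} (X : Matrix (Fin n) (Fin n) ℂ) :
    frobeniusNorm X = ‖X‖ := by
  have hz : ∀ z : ℂ, (star z * z).re = ‖z‖ ^ (2:ℝ) := by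
    intro z
    rw [show star z = (starRingEnd ℂ) z from rfl, ← Complex.normSq_eq_conj_mul_self,
      Complex.ofReal_re, show (2:ℝ) = ((2:ℕ):ℝ) by norm_num, Real.rpow_natCast]
    simp [← Complex.sq_norm]
  have htr : (Xᴴ * X).trace.re = ∑ i, ∑ j, ‖X i j‖ ^ (2:ℝ) := by
    rw [Matrix.trace, Complex.re_sum]
    simp only [Matrix.diag, Matrix.mul_apply, Matrix.conjTranspose_apply, Complex.re_sum, hz]
    exact Finset.sum_comm
  rw [frobeniusNorm, htr, Matrix.frobenius_norm_def, Real.sqrt_eq_rpow]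

lemma frobeniusNorm_nonneg {n : ℕ} (X : Matrix (Fin n) (Fin n) ℂ) :
    0 ≤ frobeniusNorm X := Real.sqrt_nonneg _

lemma frobeniusNorm_mul_le {n : ℕ} (A B : Matrix (Fin n) (Fin n) ℂ) :
    frobeniusNorm (A * B) ≤ frobeniusNorm A * frobeniusNorm B := by
  rw [frobeniusNorm_eq_norm, frobeniusNorm_eq_norm, frobeniusNorm_eq_norm]
  exact norm_mul_le _ _

/-- Recurrence for powers of a unitary matrix. -/
lemma exists_pow_close {n : ℕ} (U : Matrix (Fin n) (Fin n) ℂ)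
    (hUk : ∀ k : ℕ, (U ^ k)ᴴ * U ^ k = 1) (δ : ℝ) (hδ : 0 < δ) (N : ℕ) :
    ∃ k : ℕ, N < k ∧ frobeniusNorm (U ^ k - 1) < δ := by
  set R : ℝ := frobeniusNorm (1 : Matrix (Fin n) (Fin n) ℂ) with hRdef
  have hbd : ∀ k : ℕ, U ^ k ∈ Metric.closedBall (0 : Matrix (Fin n) (Fin n) ℂ) R := by
    intro k
    rw [Metric.mem_closedBall, dist_zero_right, ← frobeniusNorm_eq_norm]
    have := frob_mul_left (U ^ k) 1 (hUk k)
    rw [mul_one] at this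
    rw [this]
  haveI : ProperSpace (Matrix (Fin n) (Fin n) ℂ) := FiniteDimensional.proper ℂ _
  obtain ⟨L, -, φ, hφ, hconv⟩ :=
    (isCompact_closedBall (0 : Matrix (Fin n) (Fin n) ℂ) R).tendsto_subseq hbd
  have hcauchy : CauchySeq (fun j => U ^ φ j) := hconv.cauchySeq
  replace hcauchy := Metric.cauchySeq_iff.1 hcauchy
  obtain ⟨M, hM⟩ := hcauchy δ hδ
  have hgap : ∀ d : ℕ, φ M + d ≤ φ (M + d) := by
    intro d
    induction d with
    | zero => simp
    | succ d ih =>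
      have h2 : φ (M + d) < φ (M + (d + 1)) := hφ (by omega)
      omega
  set k : ℕ := φ (M + (N + 1)) - φ M with hkdef
  have hkN : N < k := by have := hgap (N + 1); omega
  have hsplit : φ (M + (N + 1)) = φ M + k := by have := hgap (N + 1); omega
  have hnear : dist (U ^ φ (M + (N + 1))) (U ^ φ M) < δ :=
    hM (M + (N + 1)) (by omega) M (by omega)
  refine ⟨k, hkN, ?_⟩
  have h1 : U ^ φ M * (U ^ k - 1) = U ^ φ (M + (N + 1)) - U ^ φ M := by
    rw [mul_sub, mul_one, ← pow_add, ← hsplit]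
  calc frobeniusNorm (U ^ k - 1)
      = frobeniusNorm (U ^ φ M * (U ^ k - 1)) := (frob_mul_left _ _ (hUk _)).symm
    _ = dist (U ^ φ (M + (N + 1))) (U ^ φ M) := by
        rw [h1, frobeniusNorm_eq_norm, dist_eq_norm]
    _ < δ := hnear

end FrobSection

/-- Strong Poincaré-type recurrence for the Hamiltonian flow `φ_t(W) = exp(-itH)·W`:
for any `ε > 0` and `T > 0` there is a positive integer `k` with
`‖exp(-ikTH)·W - W‖ < ε`, and the set of such `k` is infinite. -/
theorem strong_poincare_type_recurrence {n : ℕ} (H W : Matrix (Fin n) (Fin n) ℂ)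
    (hH : H.IsHermitian) (ε T : ℝ) (hε : 0 < ε) (hT : 0 < T) :
    (∃ k : ℕ, 0 < k ∧
      frobeniusNorm (NormedSpace.exp ((-((k : ℂ) * (T : ℂ)) * Complex.I) • H) * W - W) < ε) ∧
    {k : ℕ | 0 < k ∧
      frobeniusNorm (NormedSpace.exp ((-((k : ℂ) * (T : ℂ)) * Complex.I) • H) * W - W)
        < ε}.Infinite := by
  set U : Matrix (Fin n) (Fin n) ℂ := NormedSpace.exp ((-(T:ℂ) * Complex.I) • H) with hUdef
  -- U is unitary
  have hUu : Uᴴ * U = 1 := by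
    rw [hUdef, ← Matrix.exp_conjTranspose, conjTranspose_smul, hH.eq,
      ← Matrix.exp_add_of_commute _ _
        (((Commute.refl H).smul_left _).smul_right _), ← add_smul]
    have h0 : star (-(T:ℂ) * Complex.I) + (-(T:ℂ) * Complex.I) = 0 := by
      simp [Complex.ext_iff]
    rw [h0, zero_smul, NormedSpace.exp_zero]
  -- exp at integer times is a power of U
  have hpow : ∀ k : ℕ, NormedSpace.exp ((-((k : ℂ) * (T : ℂ)) * Complex.I) • H) = U ^ k := by
    intro k
    rw [hUdef, ← Matrix.exp_nsmul]
    congr 1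
    rw [← Nat.cast_smul_eq_nsmul ℂ, smul_smul]
    congr 1
    ring
  -- powers of U are unitary
  have hUk : ∀ k : ℕ, (U ^ k)ᴴ * U ^ k = 1 := by
    intro k
    induction k with
    | zero => simp
    | succ k ih =>
      rw [pow_succ, conjTranspose_mul, mul_assoc, ← mul_assoc ((U ^ k)ᴴ), ih, one_mul, hUu]
  -- main claim
  have claim : ∀ N : ℕ, ∃ k : ℕ, N < k ∧ frobeniusNorm (U ^ k * W - W) < ε := by
    intro N
    have hWnn : 0 ≤ frobeniusNorm W := frobeniusNorm_nonneg W
    have hδ : 0 < ε / (frobeniusNorm W + 1) := div_pos hε (by linarith)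
    obtain ⟨k, hkN, hkey⟩ := exists_pow_close U hUk _ hδ N
    refine ⟨k, hkN, ?_⟩
    have h2 : U ^ k * W - W = (U ^ k - 1) * W := by rw [sub_mul, one_mul]
    rw [h2]
    have h3 := frobeniusNorm_mul_le (U ^ k - 1) W
    have h4 : ε = ε / (frobeniusNorm W + 1) * (frobeniusNorm W + 1) := by
      rw [div_mul_cancel₀]; linarith
    nlinarith [hkey, hWnn, h3]
  constructor
  · obtain ⟨k, hk1, hk2⟩ := claim 0
    exact ⟨k, hk1, by rw [hpow k]; exact hk2⟩
  · have hset : {k : ℕ | 0 < k ∧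
        frobeniusNorm (NormedSpace.exp ((-((k : ℂ) * (T : ℂ)) * Complex.I) • H) * W - W) < ε}
        = {k : ℕ | 0 < k ∧ frobeniusNorm (U ^ k * W - W) < ε} := by
      ext k; rw [Set.mem_setOf_eq, Set.mem_setOf_eq, hpow k]
    rw [hset]
    refine Set.infinite_of_not_bddAbove ?_
    rintro ⟨B, hB⟩
    obtain ⟨k, hk1, hk2⟩ := claim B
    have : k ≤ B := hB ⟨by omega, hk2⟩
    omega
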